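/- Let S be a cut of CC_k and let 0 ≤ i < k. If exactly one of rows i and i+1 is monochromatic with respect to S (and the other is bichromatic), then exactly one vertex x among {v_i, v_{i+1}, v'_i, v'_{i+1}} has a different S-membership than the other three, and cs(swap(S,i)) = cs(S) + 1 if x ∈ {v_i, v'_{i+1}}, while cs(swap(S,i)) = cs(S) − 1 if x ∈ {v_{i+1}, v'_i}. -/

import Mathlib

/-- The cut size of a cut `S` of a finite simple graph `G`: the number of edges of `G` with
exactly one endpoint in `S` (counted as ordered pairs whose first component is in `S`). -/
def cutSize {V : Type*} [Fintype V] [DecidableEq V] (G : SimpleGraph V) [DecidableRel G.Adj]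
    (S : Finset V) : ℕ :=
  ((Finset.univ : Finset (V × V)).filter fun p => G.Adj p.1 p.2 ∧ p.1 ∈ S ∧ p.2 ∉ S).card

def ccRel (k : ℕ) : (Fin (k+1) ⊕ Fin (k+1)) → (Fin (k+1) ⊕ Fin (k+1)) → Prop
  | Sum.inl _, Sum.inl _ => True
  | Sum.inr _, Sum.inr _ => True
  | Sum.inl i, Sum.inr j => (j : ℕ) < (i : ℕ)
  | Sum.inr _, Sum.inl _ => False

instance (k : ℕ) : DecidableRel (ccRel k) := fun u v =>
  match u, v with
  | Sum.inl _, Sum.inl _ => inferInstanceAs (Decidable True)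
  | Sum.inr _, Sum.inr _ => inferInstanceAs (Decidable True)
  | Sum.inl i, Sum.inr j => inferInstanceAs (Decidable ((j : ℕ) < (i : ℕ)))
  | Sum.inr _, Sum.inl _ => inferInstanceAs (Decidable False)

/-- The graph `CC_k`: vertices `v_0,…,v_k` (encoded `Sum.inl i`) and `v'_0,…,v'_k`
(encoded `Sum.inr j`); each side is a clique and `v_i ~ v'_j` iff `j < i`. -/
def CCk (k : ℕ) : SimpleGraph (Fin (k+1) ⊕ Fin (k+1)) := SimpleGraph.fromRel (ccRel k)

instance (k : ℕ) : DecidableRel (CCk k).Adj := fun u v =>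
  inferInstanceAs (Decidable (u ≠ v ∧ (ccRel k u v ∨ ccRel k v u)))

/-- Row `i` of a cut `S` of `CC_k` is monochromatic: `v_i` and `v'_i` are both in `S` or
both not in `S` (otherwise the row is bichromatic). -/
def rowMono (k : ℕ) (S : Finset (Fin (k+1) ⊕ Fin (k+1))) (i : Fin (k+1)) : Prop :=
  (Sum.inl i ∈ S ↔ Sum.inr i ∈ S)

/-- `swap(S,i)`: the cut obtained from `S` by exchanging the memberships of `v_i` and
`v_{i+1}` and exchanging the memberships of `v'_i` and `v'_{i+1}`. -/
def swapCut (k : ℕ) (S : Finset (Fin (k+1) ⊕ Fin (k+1))) (i : Fin k) :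
    Finset (Fin (k+1) ⊕ Fin (k+1)) :=
  S.image ((Equiv.swap (Sum.inl i.castSucc : Fin (k+1) ⊕ Fin (k+1)) (Sum.inl i.succ)).trans
    (Equiv.swap (Sum.inr i.castSucc : Fin (k+1) ⊕ Fin (k+1)) (Sum.inr i.succ)))

/-- The four vertices of rows `i` and `i+1` of `CC_k`. -/
def quad (k : ℕ) (i : Fin k) : Finset (Fin (k+1) ⊕ Fin (k+1)) :=
  {Sum.inl i.castSucc, Sum.inl i.succ, Sum.inr i.castSucc, Sum.inr i.succ}

abbrev CCV (k : ℕ) := Fin (k+1) ⊕ Fin (k+1)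

def sig (k : ℕ) (i : Fin k) : Equiv.Perm (CCV k) :=
  (Equiv.swap (Sum.inl i.castSucc : CCV k) (Sum.inl i.succ)).trans
    (Equiv.swap (Sum.inr i.castSucc : CCV k) (Sum.inr i.succ))

lemma sig_inl (k : ℕ) (i : Fin k) (a : Fin (k+1)) :
    sig k i (Sum.inl a) = Sum.inl (Equiv.swap i.castSucc i.succ a) := by
  unfold sig
  rw [Equiv.trans_apply, Function.Injective.swap_apply Sum.inl_injective]
  exact Equiv.swap_apply_of_ne_of_ne (by simp) (by simp)

lemma sig_inr (k : ℕ) (i : Fin k) (a : Fin (k+1)) :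
    sig k i (Sum.inr a) = Sum.inr (Equiv.swap i.castSucc i.succ a) := by
  unfold sig
  rw [Equiv.trans_apply]
  have h1 : (Equiv.swap (Sum.inl i.castSucc : CCV k) (Sum.inl i.succ)) (Sum.inr a) = Sum.inr a :=
    Equiv.swap_apply_of_ne_of_ne (by simp) (by simp)
  rw [h1, Function.Injective.swap_apply Sum.inr_injective]

lemma sig_sig (k : ℕ) (i : Fin k) (x : CCV k) : sig k i (sig k i x) = x := by
  cases x <;> simp [sig_inl, sig_inr]

lemma adj_inl_inl (k : ℕ) (a b : Fin (k+1)) :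
    (CCk k).Adj (Sum.inl a) (Sum.inl b) ↔ a ≠ b := by
  simp [CCk, SimpleGraph.fromRel_adj, ccRel]

lemma adj_inr_inr (k : ℕ) (a b : Fin (k+1)) :
    (CCk k).Adj (Sum.inr a) (Sum.inr b) ↔ a ≠ b := by
  simp [CCk, SimpleGraph.fromRel_adj, ccRel]

lemma adj_inl_inr (k : ℕ) (a b : Fin (k+1)) :
    (CCk k).Adj (Sum.inl a) (Sum.inr b) ↔ (b : ℕ) < (a : ℕ) := by
  simp [CCk, SimpleGraph.fromRel_adj, ccRel]

lemma adj_inr_inl (k : ℕ) (a b : Fin (k+1)) :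
    (CCk k).Adj (Sum.inr b) (Sum.inl a) ↔ (b : ℕ) < (a : ℕ) := by
  rw [SimpleGraph.adj_comm]; exact adj_inl_inr k a b

lemma swap_lt (k : ℕ) (i : Fin k) (a b : Fin (k+1))
    (h1 : ¬(a = i.castSucc ∧ b = i.succ)) (h2 : ¬(a = i.succ ∧ b = i.castSucc)) :
    ((Equiv.swap i.castSucc i.succ b : Fin (k+1)) : ℕ)
      < ((Equiv.swap i.castSucc i.succ a : Fin (k+1)) : ℕ) ↔ (b : ℕ) < (a : ℕ) := by
  have hc : ((i.castSucc : Fin (k+1)) : ℕ) = (i : ℕ) := rfl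
  have hs : ((i.succ : Fin (k+1)) : ℕ) = (i : ℕ) + 1 := rfl
  simp only [Equiv.swap_apply_def]
  split_ifs <;> simp_all [Fin.ext_iff] <;> omega

lemma mem_swapCut (k : ℕ) (S : Finset (CCV k)) (i : Fin k) (x : CCV k) :
    x ∈ swapCut k S i ↔ sig k i x ∈ S := by
  have hsw : swapCut k S i = S.image (sig k i) := rfl
  rw [hsw]
  simp only [Finset.mem_image]
  constructor
  · rintro ⟨y, hy, rfl⟩; rwa [sig_sig]
  · intro hx; exact ⟨_, hx, sig_sig k i x⟩

lemma adj_sig (k : ℕ) (i : Fin k) (p : CCV k × CCV k)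
    (h : p ≠ (Sum.inl i.succ, Sum.inr i.castSucc) ∧ p ≠ (Sum.inr i.castSucc, Sum.inl i.succ)
       ∧ p ≠ (Sum.inl i.castSucc, Sum.inr i.succ) ∧ p ≠ (Sum.inr i.succ, Sum.inl i.castSucc)) :
    (CCk k).Adj (sig k i p.1) (sig k i p.2) ↔ (CCk k).Adj p.1 p.2 := by
  obtain ⟨u, v⟩ := p
  obtain ⟨h1, h2, h3, h4⟩ := h
  simp only [ne_eq, Prod.mk.injEq, not_and] at h1 h2 h3 h4
  cases u with
  | inl a =>
    cases v with
    | inl b =>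
      rw [sig_inl, sig_inl, adj_inl_inl, adj_inl_inl, (Equiv.swap _ _).injective.ne_iff]
    | inr b =>
      rw [sig_inl, sig_inr, adj_inl_inr, adj_inl_inr]
      apply swap_lt
      · rintro ⟨rfl, rfl⟩
        exact h3 (by simp) rfl
      · rintro ⟨rfl, rfl⟩
        exact h1 (by simp) rfl
  | inr a =>
    cases v with
    | inl b =>
      rw [sig_inr, sig_inl, adj_inr_inl, adj_inr_inl]
      apply swap_lt
      · rintro ⟨rfl, rfl⟩
        exact h4 (by simp) rfl
      · rintro ⟨rfl, rfl⟩
        exact h2 (by simp) rfl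
    | inr b =>
      rw [sig_inr, sig_inr, adj_inr_inr, adj_inr_inr, (Equiv.swap _ _).injective.ne_iff]

set_option maxHeartbeats 1600000 in
lemma main_count (k : ℕ) (S : Finset (CCV k)) (i : Fin k) :
    cutSize (CCk k) (swapCut k S i)
      + ((if Sum.inl i.succ ∈ S ∧ Sum.inr i.castSucc ∉ S then 1 else 0)
        + (if Sum.inr i.castSucc ∈ S ∧ Sum.inl i.succ ∉ S then 1 else 0))
    = cutSize (CCk k) S
      + ((if Sum.inl i.castSucc ∈ S ∧ Sum.inr i.succ ∉ S then 1 else 0)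
        + (if Sum.inr i.succ ∈ S ∧ Sum.inl i.castSucc ∉ S then 1 else 0)) := by
  have hlt : ((i.castSucc : Fin (k+1)) : ℕ) < ((i.succ : Fin (k+1)) : ℕ) :=
    Fin.lt_def.mp (Fin.castSucc_lt_succ (i := i))
  have hnlt : ¬ ((i.succ : Fin (k+1)) : ℕ) < ((i.castSucc : Fin (k+1)) : ℕ) := by omega
  set Q : Finset (CCV k × CCV k) :=
    {(Sum.inl i.succ, Sum.inr i.castSucc), (Sum.inr i.castSucc, Sum.inl i.succ),
     (Sum.inl i.castSucc, Sum.inr i.succ), (Sum.inr i.succ, Sum.inl i.castSucc)} with hQ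
  set B := Finset.univ.filter
      (fun p : CCV k × CCV k => (CCk k).Adj p.1 p.2 ∧ p.1 ∈ S ∧ p.2 ∉ S) with hB
  set B' := Finset.univ.filter
      (fun p : CCV k × CCV k =>
        (CCk k).Adj (sig k i p.1) (sig k i p.2) ∧ p.1 ∈ S ∧ p.2 ∉ S) with hB'
  have hcutS : cutSize (CCk k) S = B.card := rfl
  have hcut : cutSize (CCk k) (swapCut k S i) = B'.card := by
    unfold cutSize
    refine (Finset.card_nbij' (fun p => (sig k i p.1, sig k i p.2))
      (fun p => (sig k i p.1, sig k i p.2)) ?_ ?_ ?_ ?_).symm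
    · intro p hp
      simp only [hB', Finset.mem_coe, Finset.mem_filter, Finset.mem_univ, true_and] at hp ⊢
      exact ⟨hp.1, by rw [mem_swapCut, sig_sig]; exact hp.2.1,
        by rw [mem_swapCut, sig_sig]; exact hp.2.2⟩
    · intro p hp
      simp only [hB', Finset.mem_coe, Finset.mem_filter, Finset.mem_univ, true_and] at hp ⊢
      rw [mem_swapCut, mem_swapCut] at hp
      exact ⟨by rw [sig_sig, sig_sig]; exact hp.1, hp.2.1, hp.2.2⟩
    · intro p _; ext <;> simp [sig_sig]
    · intro p _; ext <;> simp [sig_sig]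
  have key : ∀ p : CCV k × CCV k, ¬ p ∈ Q →
      ((CCk k).Adj (sig k i p.1) (sig k i p.2) ↔ (CCk k).Adj p.1 p.2) := by
    intro p hp
    apply adj_sig
    simp only [hQ, Finset.mem_insert, Finset.mem_singleton, not_or] at hp
    exact hp
  have h2 : (B.filter (fun p => p ∈ Q)).card + (B.filter (fun p => ¬ p ∈ Q)).card = B.card :=
    Finset.card_filter_add_card_filter_not _
  have h2' : (B'.filter (fun p => p ∈ Q)).card + (B'.filter (fun p => ¬ p ∈ Q)).card = B'.card :=
    Finset.card_filter_add_card_filter_not _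
  have h3 : B.filter (fun p => ¬ p ∈ Q) = B'.filter (fun p => ¬ p ∈ Q) := by
    ext p
    simp only [hB, hB', Finset.mem_filter, Finset.mem_univ, true_and]
    by_cases hp : p ∈ Q
    · simp [hp]
    · have hiff := key p hp
      rw [hiff]
  have hmemB1 : ((Sum.inl i.succ, Sum.inr i.castSucc) : CCV k × CCV k) ∈ B ↔
      (Sum.inl i.succ ∈ S ∧ Sum.inr i.castSucc ∉ S) := by
    simp [hB, adj_inl_inr, hlt]
  have hmemB2 : ((Sum.inr i.castSucc, Sum.inl i.succ) : CCV k × CCV k) ∈ B ↔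
      (Sum.inr i.castSucc ∈ S ∧ Sum.inl i.succ ∉ S) := by
    simp [hB, adj_inr_inl, hlt]
  have hmemB3 : ((Sum.inl i.castSucc, Sum.inr i.succ) : CCV k × CCV k) ∉ B := by
    simp [hB, adj_inl_inr, hnlt]
  have hmemB4 : ((Sum.inr i.succ, Sum.inl i.castSucc) : CCV k × CCV k) ∉ B := by
    simp [hB, adj_inr_inl, hnlt]
  have hs1 : sig k i (Sum.inl i.castSucc : CCV k) = Sum.inl i.succ := by simp [sig_inl]
  have hs2 : sig k i (Sum.inl i.succ : CCV k) = Sum.inl i.castSucc := by simp [sig_inl]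
  have hs3 : sig k i (Sum.inr i.castSucc : CCV k) = Sum.inr i.succ := by simp [sig_inr]
  have hs4 : sig k i (Sum.inr i.succ : CCV k) = Sum.inr i.castSucc := by simp [sig_inr]
  have hmemB'1 : ((Sum.inl i.succ, Sum.inr i.castSucc) : CCV k × CCV k) ∉ B' := by
    simp [hB', hs2, hs3, adj_inl_inr, hnlt]
  have hmemB'2 : ((Sum.inr i.castSucc, Sum.inl i.succ) : CCV k × CCV k) ∉ B' := by
    simp [hB', hs2, hs3, adj_inr_inl, hnlt]
  have hmemB'3 : ((Sum.inl i.castSucc, Sum.inr i.succ) : CCV k × CCV k) ∈ B' ↔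
      (Sum.inl i.castSucc ∈ S ∧ Sum.inr i.succ ∉ S) := by
    simp [hB', hs1, hs4, adj_inl_inr, hlt]
  have hmemB'4 : ((Sum.inr i.succ, Sum.inl i.castSucc) : CCV k × CCV k) ∈ B' ↔
      (Sum.inr i.succ ∈ S ∧ Sum.inl i.castSucc ∉ S) := by
    simp [hB', hs1, hs4, adj_inr_inl, hlt]
  have hfilterB : B.filter (fun p => p ∈ Q) = Q.filter (fun p => p ∈ B) := by
    ext p; simp only [Finset.mem_filter]; exact and_comm
  have hfilterB' : B'.filter (fun p => p ∈ Q) = Q.filter (fun p => p ∈ B') := by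
    ext p; simp only [Finset.mem_filter]; exact and_comm
  have hne : (i.castSucc : Fin (k+1)) ≠ i.succ := by
    intro hcon; rw [Fin.ext_iff] at hcon; omega
  have hBQ : (Q.filter (fun p => p ∈ B)).card
      = (if Sum.inl i.succ ∈ S ∧ Sum.inr i.castSucc ∉ S then 1 else 0)
        + (if Sum.inr i.castSucc ∈ S ∧ Sum.inl i.succ ∉ S then 1 else 0) := by
    by_cases hc1 : (Sum.inl i.succ ∈ S ∧ Sum.inr i.castSucc ∉ S) <;>
      by_cases hc2 : (Sum.inr i.castSucc ∈ S ∧ Sum.inl i.succ ∉ S)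
    · exact absurd hc1.1 hc2.2
    · simp [hQ, Finset.filter_insert, Finset.filter_singleton, hmemB1, hmemB2, hmemB3, hmemB4, hc1, hc2]
    · simp [hQ, Finset.filter_insert, Finset.filter_singleton, hmemB1, hmemB2, hmemB3, hmemB4, hc1, hc2]
    · simp [hQ, Finset.filter_insert, Finset.filter_singleton, hmemB1, hmemB2, hmemB3, hmemB4, hc1, hc2]
  have hB'Q : (Q.filter (fun p => p ∈ B')).card
      = (if Sum.inl i.castSucc ∈ S ∧ Sum.inr i.succ ∉ S then 1 else 0)
        + (if Sum.inr i.succ ∈ S ∧ Sum.inl i.castSucc ∉ S then 1 else 0) := by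
    by_cases hc1 : (Sum.inl i.castSucc ∈ S ∧ Sum.inr i.succ ∉ S) <;>
      by_cases hc2 : (Sum.inr i.succ ∈ S ∧ Sum.inl i.castSucc ∉ S)
    · exact absurd hc1.1 hc2.2
    · simp [hQ, Finset.filter_insert, Finset.filter_singleton, hmemB'1, hmemB'2, hmemB'3, hmemB'4, hc1, hc2, hne]
    · simp [hQ, Finset.filter_insert, Finset.filter_singleton, hmemB'1, hmemB'2, hmemB'3, hmemB'4, hc1, hc2, hne]
    · simp [hQ, Finset.filter_insert, Finset.filter_singleton, hmemB'1, hmemB'2, hmemB'3, hmemB'4, hc1, hc2, hne]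
  rw [hcut, hcutS, ← h2, ← h2', h3, hfilterB, hfilterB', hBQ, hB'Q]
  omega

lemma uniq_aux {α : Type*} [DecidableEq α] (q S : Finset α) (x x' : α)
    (hx' : x' ∈ q) (hq : 3 ≤ q.card)
    (hpx : ∀ y ∈ q, y ≠ x → (y ∈ S ↔ x ∉ S))
    (hpx' : ∀ y ∈ q, y ≠ x' → (y ∈ S ↔ x' ∉ S)) : x' = x := by
  by_contra hne
  have hz : (q \ {x, x'}).Nonempty := by
    rw [← Finset.card_pos]
    have h1 : ({x, x'} : Finset α).card ≤ 2 :=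
      le_trans (Finset.card_insert_le _ _) (by simp)
    have h2 := Finset.le_card_sdiff ({x, x'} : Finset α) q
    omega
  obtain ⟨z, hz⟩ := hz
  rw [Finset.mem_sdiff, Finset.mem_insert, Finset.mem_singleton] at hz
  obtain ⟨hzq, hzm⟩ := hz
  push_neg at hzm
  have h1 := hpx z hzq hzm.1
  have h2 := hpx' z hzq hzm.2
  have h3 := hpx x' hx' hne
  tauto

lemma quad_card (k : ℕ) (i : Fin k) : 3 ≤ (quad k i).card := by
  have hne : (i.castSucc : Fin (k+1)) ≠ i.succ := by
    intro hcon; rw [Fin.ext_iff] at hcon; simp [Fin.coe_castSucc, Fin.val_succ] at hcon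
  have : (quad k i).card = 4 := by
    simp [quad, Finset.card_insert_of_notMem, hne]
  omega


/-- If exactly one of rows `i`, `i+1` is monochromatic w.r.t. the cut `S` of `CC_k`, then
exactly one vertex `x` among `{v_i, v_{i+1}, v'_i, v'_{i+1}}` has a different `S`-membership
than the other three, and `cs(swap(S,i)) = cs(S) + 1` if `x ∈ {v_i, v'_{i+1}}`, while
`cs(swap(S,i)) = cs(S) − 1` if `x ∈ {v_{i+1}, v'_i}`. -/
theorem cutSize_swapCut_of_mixed_kind (k : ℕ) (S : Finset (Fin (k+1) ⊕ Fin (k+1))) (i : Fin k)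
    (h : ¬ (rowMono k S i.castSucc ↔ rowMono k S i.succ)) :
    ∃ x ∈ quad k i,
      (∀ y ∈ quad k i, y ≠ x → (y ∈ S ↔ x ∉ S)) ∧
      (∀ x' ∈ quad k i, (∀ y ∈ quad k i, y ≠ x' → (y ∈ S ↔ x' ∉ S)) → x' = x) ∧
      ((x = Sum.inl i.castSucc ∨ x = Sum.inr i.succ) →
        cutSize (CCk k) (swapCut k S i) = cutSize (CCk k) S + 1) ∧
      ((x = Sum.inl i.succ ∨ x = Sum.inr i.castSucc) →
        cutSize (CCk k) (swapCut k S i) + 1 = cutSize (CCk k) S) := by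
  have hij : (i.castSucc : Fin (k+1)) ≠ i.succ := by
    intro hcon; rw [Fin.ext_iff] at hcon; simp [Fin.coe_castSucc, Fin.val_succ] at hcon
  have M := main_count k S i
  by_cases hA : Sum.inl i.castSucc ∈ S <;> by_cases hC : Sum.inr i.castSucc ∈ S <;>
    by_cases hB : Sum.inl i.succ ∈ S <;> by_cases hD : Sum.inr i.succ ∈ S <;>
    simp only [hA, hB, hC, hD, not_true, not_false_iff, and_true, and_false, true_and,
      false_and, if_true, if_false, not_false_eq_true, if_neg, if_pos] at M <;>
    first
      | (exfalso; apply h; simp [rowMono, hA, hB, hC, hD]; done)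
      | skip
  · -- x = Sum.inr i.succ, +1
    have hprop : ∀ y ∈ quad k i, y ≠ (Sum.inr i.succ : Fin (k+1) ⊕ Fin (k+1)) →
        (y ∈ S ↔ (Sum.inr i.succ : Fin (k+1) ⊕ Fin (k+1)) ∉ S) := by
      intro y hy hne2
      simp only [quad, Finset.mem_insert, Finset.mem_singleton] at hy
      rcases hy with rfl|rfl|rfl|rfl <;> simp_all
    refine ⟨Sum.inr i.succ, by simp [quad], hprop,
      fun x' hx' hp' => uniq_aux (quad k i) S _ x' hx' (quad_card k i) hprop hp', ?_, ?_⟩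
    · intro hcon
      omega
    · intro hcon
      exfalso; rcases hcon with hcon|hcon <;> simp_all [Fin.ext_iff]
  · -- x = Sum.inl i.succ, -1
    have hprop : ∀ y ∈ quad k i, y ≠ (Sum.inl i.succ : Fin (k+1) ⊕ Fin (k+1)) →
        (y ∈ S ↔ (Sum.inl i.succ : Fin (k+1) ⊕ Fin (k+1)) ∉ S) := by
      intro y hy hne2
      simp only [quad, Finset.mem_insert, Finset.mem_singleton] at hy
      rcases hy with rfl|rfl|rfl|rfl <;> simp_all
    refine ⟨Sum.inl i.succ, by simp [quad], hprop,
      fun x' hx' hp' => uniq_aux (quad k i) S _ x' hx' (quad_card k i) hprop hp', ?_, ?_⟩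
    · intro hcon
      exfalso; rcases hcon with hcon|hcon <;> simp_all [Fin.ext_iff]
    · intro hcon
      omega
  · -- x = Sum.inr i.castSucc, -1
    have hprop : ∀ y ∈ quad k i, y ≠ (Sum.inr i.castSucc : Fin (k+1) ⊕ Fin (k+1)) →
        (y ∈ S ↔ (Sum.inr i.castSucc : Fin (k+1) ⊕ Fin (k+1)) ∉ S) := by
      intro y hy hne2
      simp only [quad, Finset.mem_insert, Finset.mem_singleton] at hy
      rcases hy with rfl|rfl|rfl|rfl <;> simp_all
    refine ⟨Sum.inr i.castSucc, by simp [quad], hprop,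
      fun x' hx' hp' => uniq_aux (quad k i) S _ x' hx' (quad_card k i) hprop hp', ?_, ?_⟩
    · intro hcon
      exfalso; rcases hcon with hcon|hcon <;> simp_all [Fin.ext_iff]
    · intro hcon
      omega
  · -- x = Sum.inl i.castSucc, +1
    have hprop : ∀ y ∈ quad k i, y ≠ (Sum.inl i.castSucc : Fin (k+1) ⊕ Fin (k+1)) →
        (y ∈ S ↔ (Sum.inl i.castSucc : Fin (k+1) ⊕ Fin (k+1)) ∉ S) := by
      intro y hy hne2
      simp only [quad, Finset.mem_insert, Finset.mem_singleton] at hy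
      rcases hy with rfl|rfl|rfl|rfl <;> simp_all
    refine ⟨Sum.inl i.castSucc, by simp [quad], hprop,
      fun x' hx' hp' => uniq_aux (quad k i) S _ x' hx' (quad_card k i) hprop hp', ?_, ?_⟩
    · intro hcon
      omega
    · intro hcon
      exfalso; rcases hcon with hcon|hcon <;> simp_all [Fin.ext_iff]
  · -- x = Sum.inl i.castSucc, +1
    have hprop : ∀ y ∈ quad k i, y ≠ (Sum.inl i.castSucc : Fin (k+1) ⊕ Fin (k+1)) →
        (y ∈ S ↔ (Sum.inl i.castSucc : Fin (k+1) ⊕ Fin (k+1)) ∉ S) := by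
      intro y hy hne2
      simp only [quad, Finset.mem_insert, Finset.mem_singleton] at hy
      rcases hy with rfl|rfl|rfl|rfl <;> simp_all
    refine ⟨Sum.inl i.castSucc, by simp [quad], hprop,
      fun x' hx' hp' => uniq_aux (quad k i) S _ x' hx' (quad_card k i) hprop hp', ?_, ?_⟩
    · intro hcon
      omega
    · intro hcon
      exfalso; rcases hcon with hcon|hcon <;> simp_all [Fin.ext_iff]
  · -- x = Sum.inr i.castSucc, -1
    have hprop : ∀ y ∈ quad k i, y ≠ (Sum.inr i.castSucc : Fin (k+1) ⊕ Fin (k+1)) →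
        (y ∈ S ↔ (Sum.inr i.castSucc : Fin (k+1) ⊕ Fin (k+1)) ∉ S) := by
      intro y hy hne2
      simp only [quad, Finset.mem_insert, Finset.mem_singleton] at hy
      rcases hy with rfl|rfl|rfl|rfl <;> simp_all
    refine ⟨Sum.inr i.castSucc, by simp [quad], hprop,
      fun x' hx' hp' => uniq_aux (quad k i) S _ x' hx' (quad_card k i) hprop hp', ?_, ?_⟩
    · intro hcon
      exfalso; rcases hcon with hcon|hcon <;> simp_all [Fin.ext_iff]
    · intro hcon
      omega
  · -- x = Sum.inl i.succ, -1
    have hprop : ∀ y ∈ quad k i, y ≠ (Sum.inl i.succ : Fin (k+1) ⊕ Fin (k+1)) →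
        (y ∈ S ↔ (Sum.inl i.succ : Fin (k+1) ⊕ Fin (k+1)) ∉ S) := by
      intro y hy hne2
      simp only [quad, Finset.mem_insert, Finset.mem_singleton] at hy
      rcases hy with rfl|rfl|rfl|rfl <;> simp_all
    refine ⟨Sum.inl i.succ, by simp [quad], hprop,
      fun x' hx' hp' => uniq_aux (quad k i) S _ x' hx' (quad_card k i) hprop hp', ?_, ?_⟩
    · intro hcon
      exfalso; rcases hcon with hcon|hcon <;> simp_all [Fin.ext_iff]
    · intro hcon
      omega
  · -- x = Sum.inr i.succ, +1
    have hprop : ∀ y ∈ quad k i, y ≠ (Sum.inr i.succ : Fin (k+1) ⊕ Fin (k+1)) →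
        (y ∈ S ↔ (Sum.inr i.succ : Fin (k+1) ⊕ Fin (k+1)) ∉ S) := by
      intro y hy hne2
      simp only [quad, Finset.mem_insert, Finset.mem_singleton] at hy
      rcases hy with rfl|rfl|rfl|rfl <;> simp_all
    refine ⟨Sum.inr i.succ, by simp [quad], hprop,
      fun x' hx' hp' => uniq_aux (quad k i) S _ x' hx' (quad_card k i) hprop hp', ?_, ?_⟩
    · intro hcon
      omega
    · intro hcon
      exfalso; rcases hcon with hcon|hcon <;> simp_all [Fin.ext_iff]
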